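/- Let Ω ⊂ ℂ² be a bounded convex domain and let f, g : 𝔻 → ∂Ω be non-constant holomorphic maps, continuous on closure(𝔻), each contained in a complex line: f(𝔻) ⊂ L₁ and g(𝔻) ⊂ L₂ where L₁, L₂ are complex affine lines with L₁ ∩ Ω = ∅ and L₂ ∩ Ω = ∅. If closure(f(𝔻)) ∩ closure(g(𝔻)) ≠ ∅ and ∂Ω has a unique supporting real hyperplane at each point of L₁ ∩ ∂Ω and L₂ ∩ ∂Ω (smoothness of the boundary), then L₁ = L₂. -/

import Mathlib

open Metric

/-- A complex affine line in ℂ². -/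
def complexLine (a b c d : ℂ) : Set (ℂ × ℂ) :=
  {p | ∃ ζ : ℂ, p = (a * ζ + b, c * ζ + d)}

/-- `ℓ` is a (unit, real) supporting functional for `Ω` at the boundary point `p`. -/
def IsSupportingFunctional (Ω : Set (ℂ × ℂ)) (p : ℂ × ℂ) (ℓ : (ℂ × ℂ) →L[ℝ] ℝ) : Prop :=
  ‖ℓ‖ = 1 ∧ ∀ z ∈ Ω, ℓ z ≤ ℓ p

lemma mem_complexLine_iff {a b c d : ℂ} (h : (a, c) ≠ (0, 0)) {q : ℂ × ℂ} :
    q ∈ complexLine a b c d ↔ c * (q.1 - b) = a * (q.2 - d) := by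
  constructor
  · rintro ⟨ζ, rfl⟩; ring
  · intro hq
    rcases eq_or_ne a 0 with ha | ha
    · have hc : c ≠ 0 := fun hc => h (by simp [ha, hc, Prod.ext_iff])
      have h1 : q.1 = b := by
        rw [ha, zero_mul] at hq
        rcases mul_eq_zero.mp hq with h | h
        · exact absurd h hc
        · exact sub_eq_zero.mp h
      exact ⟨(q.2 - d) / c, by
        rw [Prod.ext_iff]
        constructor
        · simp [ha, h1]
        · field_simp; ring⟩
    · exact ⟨(q.1 - b) / a, by
        rw [Prod.ext_iff]
        constructor
        · field_simp; ring
        · field_simp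
          linear_combination -hq⟩

lemma convex_complexLine (a b c d : ℂ) : Convex ℝ (complexLine a b c d) := by
  rintro x ⟨ζ, rfl⟩ y ⟨ζ', rfl⟩ s t hs ht hst
  refine ⟨s • ζ + t • ζ', ?_⟩
  have hst' : (s : ℂ) + (t : ℂ) = 1 := by exact_mod_cast congrArg Complex.ofReal hst
  rw [Prod.ext_iff]
  simp only [Prod.smul_mk, Prod.mk_add_mk, smul_eq_mul, Complex.real_smul]
  constructor
  · linear_combination b * hst'
  · linear_combination d * hst'

lemma exists_supporting (Ω : Set (ℂ × ℂ)) (hΩo : IsOpen Ω) (hΩc : Convex ℝ Ω)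
    (hΩne : Ω.Nonempty) (a b c d : ℂ)
    (hdisj : complexLine a b c d ∩ Ω = ∅) (p : ℂ × ℂ) (hp : p ∈ complexLine a b c d) :
    ∃ ℓ : (ℂ × ℂ) →L[ℝ] ℝ, IsSupportingFunctional Ω p ℓ ∧ ∀ ζ : ℂ, ℓ (a * ζ, c * ζ) = 0 := by
  have hdisj' : Disjoint Ω (complexLine a b c d) :=
    Set.disjoint_iff_inter_eq_empty.mpr (by rw [Set.inter_comm]; exact hdisj)
  obtain ⟨ℓ, u, hu1, hu2⟩ :=
    geometric_hahn_banach_open hΩc hΩo (convex_complexLine a b c d) hdisj'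
  obtain ⟨ζ₀, rfl⟩ := hp
  -- ℓ kills the direction
  have hdir : ∀ ζ : ℂ, ℓ (a * ζ, c * ζ) = 0 := by
    intro ζ
    by_contra hr
    set r := ℓ (a * ζ, c * ζ) with hrdef
    have key : ∀ t : ℝ, u ≤ ℓ (a * ζ₀ + b, c * ζ₀ + d) + t * r := by
      intro t
      have hmem : (a * (ζ₀ + (t : ℂ) * ζ) + b, c * (ζ₀ + (t : ℂ) * ζ) + d)
          ∈ complexLine a b c d := ⟨ζ₀ + (t : ℂ) * ζ, rfl⟩
      have := hu2 _ hmem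
      have heq : (a * (ζ₀ + (t : ℂ) * ζ) + b, c * (ζ₀ + (t : ℂ) * ζ) + d)
          = (a * ζ₀ + b, c * ζ₀ + d) + t • (a * ζ, c * ζ) := by
        rw [Prod.ext_iff]
        simp only [Prod.smul_mk, Prod.mk_add_mk, Complex.real_smul]
        constructor <;> ring
      rw [heq, map_add, map_smul, smul_eq_mul] at this
      exact this
    have := key ((u - ℓ (a * ζ₀ + b, c * ζ₀ + d) - 1) / r)
    rw [div_mul_cancel₀ _ hr] at this
    linarith
  have hlp : ∀ z ∈ Ω, ℓ z < ℓ (a * ζ₀ + b, c * ζ₀ + d) := fun z hz =>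
    lt_of_lt_of_le (hu1 z hz) (hu2 _ ⟨ζ₀, rfl⟩)
  have hℓne : ℓ ≠ 0 := by
    intro h0
    obtain ⟨z, hz⟩ := hΩne
    have := hlp z hz
    rw [h0] at this
    simp at this
  have hnormpos : (0 : ℝ) < ‖ℓ‖ := norm_pos_iff.mpr hℓne
  refine ⟨‖ℓ‖⁻¹ • ℓ, ⟨?_, ?_⟩, ?_⟩
  · have h1 : ‖‖ℓ‖⁻¹ • ℓ‖ = ‖(‖ℓ‖⁻¹)‖ * ‖ℓ‖ := norm_smul _ ℓ
    rw [h1, Real.norm_eq_abs, abs_of_pos (inv_pos.mpr hnormpos),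
      inv_mul_cancel₀ (ne_of_gt hnormpos)]
  · intro z hz
    simp only [ContinuousLinearMap.smul_apply, smul_eq_mul]
    exact mul_le_mul_of_nonneg_left (le_of_lt (hlp z hz)) (inv_nonneg.mpr (le_of_lt hnormpos))
  · intro ζ
    simp [hdir ζ]

/-- Two analytic disks in the boundary of a smooth bounded convex
domain in ℂ², each contained in a complex line disjoint from Ω, whose closures
intersect, lie in the same complex line. -/
theorem stmt5 (Ω : Set (ℂ × ℂ)) (hΩo : IsOpen Ω) (hΩb : Bornology.IsBounded Ω)
    (hΩc : Convex ℝ Ω) (hΩne : Ω.Nonempty)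
    (f g : ℂ → ℂ × ℂ)
    (hfh : DifferentiableOn ℂ f (ball (0 : ℂ) 1))
    (hgh : DifferentiableOn ℂ g (ball (0 : ℂ) 1))
    (hfc : ContinuousOn f (closedBall (0 : ℂ) 1))
    (hgc : ContinuousOn g (closedBall (0 : ℂ) 1))
    (hfb : ∀ ζ ∈ ball (0 : ℂ) 1, f ζ ∈ frontier Ω)
    (hgb : ∀ ζ ∈ ball (0 : ℂ) 1, g ζ ∈ frontier Ω)
    (hfnc : ∃ ζ₁ ∈ ball (0 : ℂ) 1, ∃ ζ₂ ∈ ball (0 : ℂ) 1, f ζ₁ ≠ f ζ₂)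
    (hgnc : ∃ ζ₁ ∈ ball (0 : ℂ) 1, ∃ ζ₂ ∈ ball (0 : ℂ) 1, g ζ₁ ≠ g ζ₂)
    (a₁ b₁ c₁ d₁ a₂ b₂ c₂ d₂ : ℂ)
    (hL₁ne : (a₁, c₁) ≠ (0, 0)) (hL₂ne : (a₂, c₂) ≠ (0, 0))
    (hfL : f '' ball (0 : ℂ) 1 ⊆ complexLine a₁ b₁ c₁ d₁)
    (hgL : g '' ball (0 : ℂ) 1 ⊆ complexLine a₂ b₂ c₂ d₂)
    (hL₁Ω : complexLine a₁ b₁ c₁ d₁ ∩ Ω = ∅)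
    (hL₂Ω : complexLine a₂ b₂ c₂ d₂ ∩ Ω = ∅)
    (hmeet : (closure (f '' ball (0 : ℂ) 1) ∩ closure (g '' ball (0 : ℂ) 1)).Nonempty)
    (hsmooth : ∀ p ∈ frontier Ω,
      (p ∈ complexLine a₁ b₁ c₁ d₁ ∨ p ∈ complexLine a₂ b₂ c₂ d₂) →
      (∃ ℓ, IsSupportingFunctional Ω p ℓ) ∧
        ∀ ℓ₁ ℓ₂, IsSupportingFunctional Ω p ℓ₁ → IsSupportingFunctional Ω p ℓ₂ →
          ℓ₁ = ℓ₂) :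
    complexLine a₁ b₁ c₁ d₁ = complexLine a₂ b₂ c₂ d₂ := by
  obtain ⟨p, hp1, hp2⟩ := hmeet
  have hcl₁ : IsClosed (complexLine a₁ b₁ c₁ d₁) := by
    have : complexLine a₁ b₁ c₁ d₁ = {q : ℂ × ℂ | c₁ * (q.1 - b₁) = a₁ * (q.2 - d₁)} :=
      Set.ext fun q => mem_complexLine_iff hL₁ne
    rw [this]
    exact isClosed_eq (by fun_prop) (by fun_prop)
  have hcl₂ : IsClosed (complexLine a₂ b₂ c₂ d₂) := by
    have : complexLine a₂ b₂ c₂ d₂ = {q : ℂ × ℂ | c₂ * (q.1 - b₂) = a₂ * (q.2 - d₂)} :=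
      Set.ext fun q => mem_complexLine_iff hL₂ne
    rw [this]
    exact isClosed_eq (by fun_prop) (by fun_prop)
  have hpL₁ : p ∈ complexLine a₁ b₁ c₁ d₁ := hcl₁.closure_subset_iff.mpr hfL hp1
  have hpL₂ : p ∈ complexLine a₂ b₂ c₂ d₂ := hcl₂.closure_subset_iff.mpr hgL hp2
  have hpF : p ∈ frontier Ω := by
    have hsub : f '' ball (0 : ℂ) 1 ⊆ frontier Ω := by
      rintro _ ⟨ζ, hζ, rfl⟩; exact hfb ζ hζ
    exact isClosed_frontier.closure_subset_iff.mpr hsub hp1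
  obtain ⟨ℓ₁, hℓ₁, hdir₁⟩ := exists_supporting Ω hΩo hΩc hΩne a₁ b₁ c₁ d₁ hL₁Ω p hpL₁
  obtain ⟨ℓ₂, hℓ₂, hdir₂⟩ := exists_supporting Ω hΩo hΩc hΩne a₂ b₂ c₂ d₂ hL₂Ω p hpL₂
  have huniq := (hsmooth p hpF (Or.inl hpL₁)).2 ℓ₁ ℓ₂ hℓ₁ hℓ₂
  rw [huniq] at hdir₁
  set ℓ := ℓ₂ with hℓdef
  by_cases hD : a₁ * c₂ - a₂ * c₁ = 0
  · -- parallel lines through a common point: equal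
    have hp₁' : c₁ * (p.1 - b₁) = a₁ * (p.2 - d₁) := (mem_complexLine_iff hL₁ne).mp hpL₁
    have hp₂' : c₂ * (p.1 - b₂) = a₂ * (p.2 - d₂) := (mem_complexLine_iff hL₂ne).mp hpL₂
    obtain ⟨lam, hlam, ha, hc⟩ : ∃ lam : ℂ, lam ≠ 0 ∧ a₂ = lam * a₁ ∧ c₂ = lam * c₁ := by
      rcases eq_or_ne a₁ 0 with h1 | h1
      · have hc₁ : c₁ ≠ 0 := fun h => hL₁ne (by simp [h1, h, Prod.ext_iff])
        have ha₂ : a₂ = 0 := by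
          have : a₂ * c₁ = 0 := by linear_combination -hD + c₂ * h1
          exact (mul_eq_zero.mp this).resolve_right hc₁
        have hc₂ : c₂ ≠ 0 := fun h => hL₂ne (by simp [ha₂, h, Prod.ext_iff])
        exact ⟨c₂ / c₁, div_ne_zero hc₂ hc₁, by simp [ha₂, h1], by field_simp⟩
      · have ha₂c : c₂ = a₂ * c₁ / a₁ := by field_simp; linear_combination hD
        have ha₂ : a₂ ≠ 0 := by
          intro h
          exact hL₂ne (by simp [h, ha₂c, Prod.ext_iff])
        exact ⟨a₂ / a₁, div_ne_zero ha₂ h1, by field_simp, by rw [ha₂c]; ring⟩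
    ext q
    rw [mem_complexLine_iff hL₁ne, mem_complexLine_iff hL₂ne]
    constructor
    · intro hq
      linear_combination lam * hq + hp₂' - lam * hp₁' + (q.1 - p.1) * hc - (q.2 - p.2) * ha
    · intro hq
      have : lam * (c₁ * (q.1 - b₁)) = lam * (a₁ * (q.2 - d₁)) := by
        linear_combination hq - hp₂' + lam * hp₁' - (q.1 - p.1) * hc + (q.2 - p.2) * ha
      exact mul_left_cancel₀ hlam this
  · -- independent directions: ℓ = 0, contradicting ‖ℓ‖ = 1
    exfalso
    have hzero : ∀ w : ℂ × ℂ, ℓ w = 0 := by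
      intro w
      set D := a₁ * c₂ - a₂ * c₁ with hDdef
      have h1 := hdir₁ ((c₂ * w.1 - a₂ * w.2) / D)
      have h2 := hdir₂ ((a₁ * w.2 - c₁ * w.1) / D)
      have heq : w = (a₁ * ((c₂ * w.1 - a₂ * w.2) / D), c₁ * ((c₂ * w.1 - a₂ * w.2) / D))
          + (a₂ * ((a₁ * w.2 - c₁ * w.1) / D), c₂ * ((a₁ * w.2 - c₁ * w.1) / D)) := by
        rw [Prod.ext_iff]
        simp only [Prod.mk_add_mk]
        constructor <;> (field_simp; ring)
      rw [heq, map_add, h1, h2, add_zero]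
    have : ℓ = 0 := ContinuousLinearMap.ext fun w => by simp [hzero w]
    rw [this] at hℓ₂
    have := hℓ₂.1
    simp at this
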